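/- Let A : ℝ^d → ℝ^d be a C² vector field and define its Gaussian divergence δ(A)(x) = Σ_{k=1}^d (x_k A^k(x) - ∂A^k/∂x_k(x)). Then the Lie derivative of δ(A) along A satisfies 𝓛_A δ(A) = |A|² + δ(𝓛_A A) + ⟨∇A, (∇A)*⟩, where 𝓛_A A = (A·∇)A is the Lie derivative (directional derivative of A along A), ⟨·,·⟩ is the Hilbert–Schmidt inner product on d×d matrices, and (∇A)* is the transpose of the Jacobian ∇A. -/

import Mathlib

open scoped BigOperators

open ContinuousLinearMap in
private lemma alg_aux {n : ℕ} (a X : Fin n → ℝ) (b : Fin n → Fin n → ℝ)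
    (c : Fin n → Fin n → Fin n → ℝ) (hc : ∀ u v k, c u v k = c v u k) :
    ∑ ℓ, a ℓ * (∑ k, (X k * b k ℓ + a k * (Pi.single ℓ 1 : Fin n → ℝ) k - c ℓ k k))
      = (∑ k, a k ^ 2)
        + (∑ k, (X k * (∑ ℓ, a ℓ * b k ℓ) - ∑ ℓ, (a ℓ * c k ℓ k + b k ℓ * b ℓ k)))
        + ∑ k, ∑ ℓ, b k ℓ * b ℓ k := by
  have h1 : ∀ ℓ, (∑ k, (X k * b k ℓ + a k * (Pi.single ℓ 1 : Fin n → ℝ) k - c ℓ k k))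
      = (∑ k, X k * b k ℓ) + a ℓ - ∑ k, c k ℓ k := by
    intro ℓ
    rw [Finset.sum_sub_distrib, Finset.sum_add_distrib]
    congr 1
    · congr 1
      simp [Pi.single_apply, mul_ite]
    · exact Finset.sum_congr rfl fun k _ => hc ℓ k k
  simp only [h1, Finset.sum_add_distrib, Finset.sum_sub_distrib, mul_add, mul_sub,
    Finset.mul_sum]
  have e1 : ∑ ℓ, ∑ k, a ℓ * (X k * b k ℓ) = ∑ k, (X k * ∑ ℓ, a ℓ * b k ℓ) := by
    rw [Finset.sum_comm]
    refine Finset.sum_congr rfl fun k _ => ?_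
    rw [Finset.mul_sum]
    exact Finset.sum_congr rfl fun ℓ _ => by ring
  have e2 : ∑ ℓ, ∑ k, a ℓ * c k ℓ k = ∑ k, ∑ ℓ, a ℓ * c k ℓ k := Finset.sum_comm
  rw [e1, e2]
  simp only [Finset.mul_sum]
  ring_nf

/-- Gaussian divergence of a vector field on `ℝ^d`:
`δ(B)(x) = ∑ k, (x_k B^k(x) - ∂_k B^k(x))`. -/
noncomputable def gaussDiv {d : ℕ} (B : (Fin d → ℝ) → (Fin d → ℝ)) (x : Fin d → ℝ) : ℝ :=
  ∑ k, (x k * B x k - fderiv ℝ B x (Pi.single k 1) k)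

/-- Lie derivative of a scalar function along a vector field: `𝓛_A f = ∑ ℓ A^ℓ ∂_ℓ f`. -/
noncomputable def lieDerivScalar {d : ℕ} (A : (Fin d → ℝ) → (Fin d → ℝ))
    (f : (Fin d → ℝ) → ℝ) (x : Fin d → ℝ) : ℝ :=
  ∑ ℓ, A x ℓ * fderiv ℝ f x (Pi.single ℓ 1)

/-- Lie derivative of a vector field along itself: `(𝓛_A A)^k = ∑ ℓ A^ℓ ∂_ℓ A^k`. -/
noncomputable def lieDerivVec {d : ℕ} (A : (Fin d → ℝ) → (Fin d → ℝ))
    (x : Fin d → ℝ) : Fin d → ℝ :=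
  fun k => ∑ ℓ, A x ℓ * fderiv ℝ A x (Pi.single ℓ 1) k

open ContinuousLinearMap in
/-- For a `C²` vector field `A`,
`𝓛_A δ(A) = |A|² + δ(𝓛_A A) + ⟨∇A, (∇A)*⟩`. -/
theorem lieDeriv_gaussDiv {d : ℕ} (A : (Fin d → ℝ) → (Fin d → ℝ))
    (hA : ContDiff ℝ 2 A) (x : Fin d → ℝ) :
    lieDerivScalar A (gaussDiv A) x
      = (∑ k, (A x k) ^ 2) + gaussDiv (lieDerivVec A) x
        + ∑ k, ∑ ℓ, fderiv ℝ A x (Pi.single ℓ 1) k * fderiv ℝ A x (Pi.single k 1) ℓ := by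
  have hAd : Differentiable ℝ A := hA.differentiable two_ne_zero
  have hD : Differentiable ℝ (fderiv ℝ A) := (hA.fderiv_right (m := 1) one_add_one_eq_two.le).differentiable one_ne_zero
  have hsymm : ∀ v w, fderiv ℝ (fderiv ℝ A) x v w = fderiv ℝ (fderiv ℝ A) x w v :=
    fun v w => second_derivative_symmetric (fun y => (hAd y).hasFDerivAt) (hD x).hasFDerivAt v w
  have hcomp : ∀ k : Fin d, HasFDerivAt (fun y => A y k)
      ((proj k : (Fin d → ℝ) →L[ℝ] ℝ).comp (fderiv ℝ A x)) x :=
    fun k => (proj k : (Fin d → ℝ) →L[ℝ] ℝ).hasFDerivAt.comp x (hAd x).hasFDerivAt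
  have hder : ∀ (v : Fin d → ℝ) (k : Fin d), HasFDerivAt (fun y => fderiv ℝ A y v k)
      (((proj k : (Fin d → ℝ) →L[ℝ] ℝ).comp (ContinuousLinearMap.apply ℝ (Fin d → ℝ) v)).comp
        (fderiv ℝ (fderiv ℝ A) x)) x := fun v k =>
    ((proj k : (Fin d → ℝ) →L[ℝ] ℝ).comp
      (ContinuousLinearMap.apply ℝ (Fin d → ℝ) v)).hasFDerivAt.comp x (hD x).hasFDerivAt
  have hX : ∀ k : Fin d, HasFDerivAt (fun y : Fin d → ℝ => y k)
      (proj k : (Fin d → ℝ) →L[ℝ] ℝ) x := fun k => hasFDerivAt_apply k x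
  -- derivative of gaussDiv A
  have hasG : HasFDerivAt (gaussDiv A)
      (∑ k, (x k • ((proj k : (Fin d → ℝ) →L[ℝ] ℝ).comp (fderiv ℝ A x))
        + A x k • (proj k : (Fin d → ℝ) →L[ℝ] ℝ)
        - ((proj k : (Fin d → ℝ) →L[ℝ] ℝ).comp
            (ContinuousLinearMap.apply ℝ (Fin d → ℝ) (Pi.single k 1))).comp
            (fderiv ℝ (fderiv ℝ A) x))) x := by
    show HasFDerivAt (fun y => ∑ k, (y k * A y k - fderiv ℝ A y (Pi.single k 1) k)) _ x
    exact HasFDerivAt.fun_sum fun k _ => ((hX k).mul (hcomp k)).sub (hder (Pi.single k 1) k)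
  -- derivative of lieDerivVec A
  have hasM : HasFDerivAt (lieDerivVec A)
      (ContinuousLinearMap.pi fun k => ∑ ℓ,
        (A x ℓ • (((proj k : (Fin d → ℝ) →L[ℝ] ℝ).comp
            (ContinuousLinearMap.apply ℝ (Fin d → ℝ) (Pi.single ℓ 1))).comp
            (fderiv ℝ (fderiv ℝ A) x))
          + fderiv ℝ A x (Pi.single ℓ 1) k
              • ((proj ℓ : (Fin d → ℝ) →L[ℝ] ℝ).comp (fderiv ℝ A x)))) x := by
    refine hasFDerivAt_pi'.2 fun k => ?_
    rw [ContinuousLinearMap.proj_pi]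
    show HasFDerivAt (fun y => ∑ ℓ, A y ℓ * fderiv ℝ A y (Pi.single ℓ 1) k) _ x
    exact HasFDerivAt.fun_sum fun ℓ _ => (hcomp ℓ).mul (hder (Pi.single ℓ 1) k)
  rw [lieDerivScalar, hasG.fderiv]
  rw [show gaussDiv (lieDerivVec A) x
      = ∑ k, (x k * lieDerivVec A x k - fderiv ℝ (lieDerivVec A) x (Pi.single k 1) k) from rfl,
    hasM.fderiv]
  simp only [lieDerivVec, ContinuousLinearMap.sum_apply, ContinuousLinearMap.add_apply,
    ContinuousLinearMap.sub_apply, ContinuousLinearMap.smul_apply, ContinuousLinearMap.coe_comp',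
    Function.comp_apply, ContinuousLinearMap.proj_apply, ContinuousLinearMap.apply_apply,
    ContinuousLinearMap.pi_apply, smul_eq_mul]
  exact alg_aux (A x) x (fun k ℓ => fderiv ℝ A x (Pi.single ℓ 1) k)
    (fun u v k => fderiv ℝ (fderiv ℝ A) x (Pi.single u 1) (Pi.single v 1) k)
    (fun u v k => congrFun (hsymm (Pi.single u 1) (Pi.single v 1)) k)
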